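/- Let A₀, A₁, …, A_d ∈ ℝ^{m×n}, b ∈ ℝ^m, and A(θ) = A₀ + Σ_{j=1}^d θ_j A_j. Suppose the matrices P_i ∈ ℝ^{m_i×m}, i = 1,…,d, satisfy P_i A_j = 0 for i ≠ j (i, j ∈ {1,…,d}), and P₀ ∈ ℝ^{m₀×m} satisfies P₀A_j = 0 for all j ∈ {1,…,d}. If z ∈ ℝ^n and θ ∈ ℝ^d with −1 ≤ θ ≤ 1 satisfy A(θ)z = b, then: (i) for every i ∈ {1,…,d} and every positive semidefinite N_i ∈ S₊^{m_i}, (b − A₀z)ᵀP_iᵀN_iP_i(b − A₀z) ≤ zᵀA_iᵀP_iᵀN_iP_iA_i z; and (ii) P₀A₀z = P₀b. -/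

import Mathlib

open Matrix

/-- If `z, θ` with `-1 ≤ θ ≤ 1` satisfy the physics equation
`(A₀ + ∑ⱼ θⱼ Aⱼ) z = b`, then the quadratic inequalities
`(b - A₀z)ᵀPᵢᵀNᵢPᵢ(b - A₀z) ≤ zᵀAᵢᵀPᵢᵀNᵢPᵢAᵢz` hold for every `i` and every
positive semidefinite `Nᵢ`, and moreover `P₀A₀z = P₀b`. -/
theorem quad_ineqs_of_physics (d m n m0 : ℕ) (mdim : Fin d → ℕ)
    (A0 : Matrix (Fin m) (Fin n) ℝ) (A : Fin d → Matrix (Fin m) (Fin n) ℝ)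
    (b : Fin m → ℝ)
    (P : (i : Fin d) → Matrix (Fin (mdim i)) (Fin m) ℝ)
    (P0 : Matrix (Fin m0) (Fin m) ℝ)
    (hP : ∀ i j : Fin d, i ≠ j → P i * A j = 0)
    (hP0 : ∀ j : Fin d, P0 * A j = 0)
    (z : Fin n → ℝ) (θ : Fin d → ℝ) (hθ : ∀ i, -1 ≤ θ i ∧ θ i ≤ 1)
    (hphys : (A0 + ∑ j, θ j • A j) *ᵥ z = b) :
    (∀ i : Fin d, ∀ N : Matrix (Fin (mdim i)) (Fin (mdim i)) ℝ, N.PosSemidef →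
      (P i *ᵥ (b - A0 *ᵥ z)) ⬝ᵥ (N *ᵥ (P i *ᵥ (b - A0 *ᵥ z))) ≤
        (P i *ᵥ (A i *ᵥ z)) ⬝ᵥ (N *ᵥ (P i *ᵥ (A i *ᵥ z)))) ∧
    P0 *ᵥ (A0 *ᵥ z) = P0 *ᵥ b := by
  have hb : b - A0 *ᵥ z = (∑ j, θ j • A j) *ᵥ z := by
    rw [← hphys, Matrix.add_mulVec]; abel
  constructor
  · intro i N hN
    have hPi : P i *ᵥ (b - A0 *ᵥ z) = θ i • (P i *ᵥ (A i *ᵥ z)) := by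
      rw [hb, Matrix.mulVec_mulVec, Matrix.mul_sum]
      rw [Finset.sum_eq_single i]
      · rw [Matrix.mul_smul, Matrix.smul_mulVec, Matrix.mulVec_mulVec]
      · intro j _ hj
        rw [Matrix.mul_smul, hP i j (Ne.symm hj), smul_zero]
      · simp
    rw [hPi, Matrix.mulVec_smul, smul_dotProduct, dotProduct_smul, smul_eq_mul,
      smul_eq_mul, ← mul_assoc]
    set v := P i *ᵥ (A i *ᵥ z)
    have hq : 0 ≤ v ⬝ᵥ (N *ᵥ v) := hN.dotProduct_mulVec_nonneg v
    have hθi : θ i * θ i ≤ 1 := by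
      nlinarith [(hθ i).1, (hθ i).2]
    nlinarith
  · have : P0 *ᵥ (b - A0 *ᵥ z) = 0 := by
      rw [hb, Matrix.mulVec_mulVec, Matrix.mul_sum]
      have : (∑ j, P0 * (θ j • A j)) = 0 := by
        apply Finset.sum_eq_zero; intro j _
        rw [Matrix.mul_smul, hP0 j, smul_zero]
      rw [this, Matrix.zero_mulVec]
    have h2 := this
    rw [Matrix.mulVec_sub, sub_eq_zero] at h2
    exact h2.symm
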